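/- HJB verification identity (Lemma 2.4): suppose v : [0,T)×ℝ^d → [0,∞) is C^{1,2} and satisfies v_t + Lv + F(y,v) = 0 on [0,T)×ℝ^d, and define V(t,y,x) = v(t,y)|x|^p. Then for every (t,y,x) ∈ [0,T)×ℝ^d×ℝ one has V_t(t,y,x) + (LV)(t,y,x) + inf_{(ξ,π)∈ℝ²} { −ξ·V_x(t,y,x) + θ(V(t,y,x−π) − V(t,y,x)) + η(y)|ξ|^p + θ γ(y)|π|^p + λ(y)|x|^p } = 0, where L acts in the y-variables and V_x is the partial derivative in x. Moreover the infimum is attained in the ξ-variable at ξ* = (v(t,y)/η(y))^β x, and, whenever γ(y)^β + v(t,y)^β > 0, in the π-variable at π* = v(t,y)^β/(γ(y)^β + v(t,y)^β)·x. -/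

import Mathlib

open scoped BigOperators NNReal

noncomputable section

/-- `ℝ^d` as Euclidean space. -/
abbrev Euc (d : ℕ) : Type := EuclideanSpace ℝ (Fin d)

/-- Partial derivative in the time variable, taken within the time set `s`. -/
noncomputable def partialT {d : ℕ} (s : Set ℝ) (w : ℝ → Euc d → ℝ) (t : ℝ) (y : Euc d) : ℝ :=
  derivWithin (fun r => w r y) s t

/-- `i`-th partial derivative in the space variable. -/
noncomputable def gradY {d : ℕ} (w : ℝ → Euc d → ℝ) (t : ℝ) (y : Euc d) (i : Fin d) : ℝ :=
  fderiv ℝ (w t) y (EuclideanSpace.single i 1)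

/-- `(i,j)` entry of the Hessian in the space variable. -/
noncomputable def hessY {d : ℕ} (w : ℝ → Euc d → ℝ) (t : ℝ) (y : Euc d) (i j : Fin d) : ℝ :=
  fderiv ℝ (fun z => fderiv ℝ (w t) z (EuclideanSpace.single j 1)) y (EuclideanSpace.single i 1)

/-- The operator `L w = ½ tr(σσᵀ D²_y w) + ⟨b, D_y w⟩`. -/
noncomputable def Lop {d n : ℕ} (b : Euc d → Euc d) (σ : Euc d → Matrix (Fin d) (Fin n) ℝ)
    (w : ℝ → Euc d → ℝ) (t : ℝ) (y : Euc d) : ℝ :=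
  (1 / 2) * ∑ i, ∑ j, (∑ k, σ y i k * σ y j k) * hessY w t y i j
    + ∑ i, b y i * gradY w t y i

/-- The nonlinearity `F(y,v) = λ(y) − v^{β+1}/(β η(y)^β) + θγ(y)v/(γ(y)^β+v^β)^{1/β} − θv`
with `β = 1/(p−1)` (so `1/β = p−1`); by Lean's conventions the third term is `0` when
`γ(y) = v = 0`. -/
noncomputable def hjbF {d : ℕ} (p θ : ℝ) (η lam gam : Euc d → ℝ) (y : Euc d) (v : ℝ) : ℝ :=
  lam y - v ^ (1 / (p - 1) + 1) / ((1 / (p - 1)) * η y ^ (1 / (p - 1)))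
    + θ * gam y * v / ((gam y ^ (1 / (p - 1)) + v ^ (1 / (p - 1))) ^ (p - 1))
    - θ * v

/-- `w` is `C^{1,2}` on `s × ℝ^d`: differentiable in time (within `s`), twice continuously
differentiable in space, with `w`, `∂_t w` and the spatial derivatives jointly continuous. -/
def IsC12On {d : ℕ} (s : Set ℝ) (w : ℝ → Euc d → ℝ) : Prop :=
  (∀ t ∈ s, ∀ y, DifferentiableWithinAt ℝ (fun r => w r y) s t) ∧
  (∀ t ∈ s, ContDiff ℝ 2 (w t)) ∧
  ContinuousOn (fun q : ℝ × Euc d => w q.1 q.2) (s ×ˢ Set.univ) ∧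
  ContinuousOn (fun q : ℝ × Euc d => partialT s w q.1 q.2) (s ×ˢ Set.univ) ∧
  ContinuousOn (fun q : ℝ × Euc d => fderiv ℝ (fun z => fderiv ℝ (w q.1) z) q.2) (s ×ˢ Set.univ)

/-- `w(t,y) → +∞` as `t → T`, locally uniformly in `y`, with `t` ranging in `[a,T)`. -/
def BlowsUpLocUnif {d : ℕ} (a T : ℝ) (w : ℝ → Euc d → ℝ) : Prop :=
  ∀ K : Set (Euc d), IsCompact K → ∀ M : ℝ,
    ∃ t₀, a ≤ t₀ ∧ t₀ < T ∧ ∀ t, t₀ ≤ t → t < T → ∀ y ∈ K, M ≤ w t y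

/-- Polynomial growth on `[a,T) × ℝ^d`: for each `s < T` a bound `C(1+‖y‖^q)` on `[a,s]`. -/
def PolyGrowthOn {d : ℕ} (a T : ℝ) (w : ℝ → Euc d → ℝ) : Prop :=
  ∀ s, a ≤ s → s < T → ∃ C > 0, ∃ q > 0,
    ∀ t, a ≤ t → t ≤ s → ∀ y : Euc d, |w t y| ≤ C * (1 + ‖y‖ ^ q)

/-- The expression inside the infimum of the HJB equation, evaluated at controls `(ξ, q)`:
`−ξ V_x(t,y,x) + θ(V(t,y,x−q) − V(t,y,x)) + η(y)|ξ|^p + θγ(y)|q|^p + λ(y)|x|^p`,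
where `V(t,y,x) = v(t,y)|x|^p`. -/
noncomputable def hjbInner {d : ℕ} (p θ : ℝ) (η lam gam : Euc d → ℝ)
    (v : ℝ → Euc d → ℝ) (t : ℝ) (y : Euc d) (x ξ q : ℝ) : ℝ :=
  -ξ * deriv (fun z : ℝ => v t y * |z| ^ p) x
    + θ * (v t y * |x - q| ^ p - v t y * |x| ^ p)
    + η y * |ξ| ^ p + θ * gam y * |q| ^ p + lam y * |x| ^ p

section scalarlemmas

lemma rpow_tangent {p : ℝ} (hp : 1 < p) {t u : ℝ} (ht : 0 ≤ t) (hu : 0 ≤ u) :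
    u ^ p + p * u ^ (p - 1) * (t - u) ≤ t ^ p := by
  rcases hu.eq_or_lt with h | h
  · rw [← h, Real.zero_rpow (by positivity), Real.zero_rpow (by intro h0; nlinarith [h0])]
    simpa using Real.rpow_nonneg ht p
  · have hb := one_add_mul_self_le_rpow_one_add (s := t / u - 1) (by
      have := div_nonneg ht h.le; linarith) hp.le
    have h1 : ((1 : ℝ) + (t / u - 1)) = t / u := by ring
    rw [h1, Real.div_rpow ht h.le] at hb
    have hup : (0:ℝ) < u ^ p := Real.rpow_pos_of_pos h p
    have hexp : u ^ (p - 1) * u = u ^ p := by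
      rw [Real.rpow_sub h, Real.rpow_one]; field_simp
    have key : u ^ p * (1 + p * (t / u - 1)) ≤ u ^ p * (t ^ p / u ^ p) :=
      mul_le_mul_of_nonneg_left hb hup.le
    have e2 : u ^ p * (t ^ p / u ^ p) = t ^ p := by field_simp
    have e3 : u ^ p * (1 + p * (t / u - 1)) = u ^ p + p * (u ^ (p-1) * t - u ^ p) := by
      rw [← hexp]; field_simp
    rw [e2, e3, ← hexp] at key
    linarith [key]

lemma abs_rpow_sub_two_mul_sq {p : ℝ} (hp : 1 < p) (x : ℝ) :
    |x| ^ (p - 2) * x * x = |x| ^ p := by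
  rcases eq_or_ne x 0 with h | h
  · simp [h, Real.zero_rpow (by positivity : p ≠ 0)]
  · have hx : (0:ℝ) < |x| := abs_pos.mpr h
    have hxx : x * x = |x| * |x| := by rcases abs_cases x with ⟨h1,_⟩|⟨h1,_⟩ <;> nlinarith [h1]
    rw [mul_assoc, hxx, ← mul_assoc, ← Real.rpow_add_one hx.ne', ← Real.rpow_add_one hx.ne']
    ring_nf

lemma abs_rpow_sub_one_mul {p : ℝ} (hp : 1 < p) (x : ℝ) :
    |x| ^ (p - 1) * |x| = |x| ^ p := by
  rcases eq_or_ne x 0 with h | h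
  · simp [h, Real.zero_rpow (by positivity : p ≠ 0),
      Real.zero_rpow (show p - 1 ≠ 0 by intro h0; nlinarith)]
  · have hx : (0:ℝ) < |x| := abs_pos.mpr h
    rw [← Real.rpow_add_one hx.ne']; ring_nf

lemma abs_rpow_sub_two_mul {p : ℝ} (hp : 1 < p) (x : ℝ) :
    |x| ^ (p - 2) * |x| = |x| ^ (p - 1) := by
  rcases eq_or_ne x 0 with h | h
  · simp [h, Real.zero_rpow (show p - 1 ≠ 0 by intro h0; nlinarith)]
  · have hx : (0:ℝ) < |x| := abs_pos.mpr h
    rw [← Real.rpow_add_one hx.ne']; ring_nf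

variable {p β η a γ : ℝ}

/-- minimality in ξ -/
lemma xi_min_scalar (hp : 1 < p) (hβ : β * (p - 1) = 1) (hη : 0 < η) (ha : 0 ≤ a) (x ξ : ℝ) :
    -((a / η) ^ β * x) * (a * (p * |x| ^ (p - 2) * x)) + η * |(a / η) ^ β * x| ^ p
      ≤ -ξ * (a * (p * |x| ^ (p - 2) * x)) + η * |ξ| ^ p := by
  set c : ℝ := (a / η) ^ β with hc
  have hc0 : 0 ≤ c := Real.rpow_nonneg (div_nonneg ha hη.le) β
  have hcp : c ^ (p - 1) = a / η := by
    rw [hc, ← Real.rpow_mul (div_nonneg ha hη.le), hβ, Real.rpow_one]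
  have hAc : p * η * (c * |x|) ^ (p - 1) = a * p * |x| ^ (p - 1) := by
    rw [Real.mul_rpow hc0 (abs_nonneg x), hcp]
    field_simp
  have hp0 : (0:ℝ) < p := by linarith
  have hD : |a * (p * |x| ^ (p - 2) * x)| = a * p * |x| ^ (p - 1) := by
    rw [abs_mul, abs_mul, abs_mul, abs_of_nonneg ha, abs_of_nonneg hp0.le,
      abs_of_nonneg (Real.rpow_nonneg (abs_nonneg x) _), ← abs_rpow_sub_two_mul hp x]
    ring
  have step1 : -(a * p * |x| ^ (p - 1)) * |ξ| ≤ -ξ * (a * (p * |x| ^ (p - 2) * x)) := by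
    have h1 : ξ * (a * (p * |x| ^ (p - 2) * x)) ≤ |ξ| * (a * p * |x| ^ (p - 1)) := by
      calc ξ * (a * (p * |x| ^ (p - 2) * x)) ≤ |ξ * (a * (p * |x| ^ (p - 2) * x))| :=
            le_abs_self _
        _ = |ξ| * |a * (p * |x| ^ (p - 2) * x)| := abs_mul _ _
        _ = |ξ| * (a * p * |x| ^ (p - 1)) := by rw [hD]
    linarith
  have hlhs : -(c * x) * (a * (p * |x| ^ (p - 2) * x)) + η * |c * x| ^ p
      = -(a * p * |x| ^ (p - 1)) * (c * |x|) + η * (c * |x|) ^ p := by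
    have e1 : |c * x| = c * |x| := by rw [abs_mul, abs_of_nonneg hc0]
    rw [e1]
    have l1 := abs_rpow_sub_two_mul_sq hp x
    have l2 := abs_rpow_sub_one_mul hp x
    have e2 : (c * x) * (a * (p * |x| ^ (p - 2) * x)) = (a * p * |x| ^ (p - 1)) * (c * |x|) := by
      linear_combination (a * p * c) * l1 - (a * p * c) * l2
    linarith [e2]
  rw [hlhs]
  have htan := rpow_tangent hp (abs_nonneg ξ) (mul_nonneg hc0 (abs_nonneg x))
  have hmul := mul_le_mul_of_nonneg_left htan hη.le
  have key : -(p * η * (c * |x|) ^ (p - 1)) * (c * |x|) + η * (c * |x|) ^ p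
      ≤ -(p * η * (c * |x|) ^ (p - 1)) * |ξ| + η * |ξ| ^ p := by nlinarith [hmul]
  rw [hAc] at key
  linarith [key, step1]

/-- value in ξ -/
lemma xi_val_scalar (hp : 1 < p) (hβ : β * (p - 1) = 1) (hη : 0 < η) (ha : 0 ≤ a) (x : ℝ) :
    -((a / η) ^ β * x) * (a * (p * |x| ^ (p - 2) * x)) + η * |(a / η) ^ β * x| ^ p
      = -(a ^ (β + 1) / (β * η ^ β)) * |x| ^ p := by
  have hβ0 : 0 < β := by nlinarith
  set c : ℝ := (a / η) ^ β with hc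
  have hc0 : 0 ≤ c := Real.rpow_nonneg (div_nonneg ha hη.le) β
  have e1 : |c * x| = c * |x| := by rw [abs_mul, abs_of_nonneg hc0]
  have l1 := abs_rpow_sub_two_mul_sq hp x
  have ecp : |c * x| ^ p = c ^ p * |x| ^ p := by
    rw [e1, Real.mul_rpow hc0 (abs_nonneg x)]
  have elhs : -(c * x) * (a * (p * |x| ^ (p - 2) * x)) + η * |c * x| ^ p
      = (-(a * p * c) + η * c ^ p) * |x| ^ p := by
    rw [ecp]; linear_combination (-(a * p * c)) * l1
  rw [elhs]
  rcases ha.eq_or_lt with h0 | h0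
  · have hc00 : c = 0 := by
      rw [hc, ← h0, zero_div, Real.zero_rpow (ne_of_gt hβ0)]
    have h2 : (0:ℝ) ^ (β + 1) = 0 := Real.zero_rpow (ne_of_gt (by linarith))
    rw [hc00, ← h0, h2]
    simp [Real.zero_rpow (ne_of_gt (by linarith : (0:ℝ) < p))]
  · have hηβ : (0:ℝ) < η ^ β := Real.rpow_pos_of_pos hη β
    have hcd : c = a ^ β / η ^ β := by rw [hc, Real.div_rpow h0.le hη.le]
    have hcp : c ^ p = a ^ (β + 1) / η ^ (β + 1) := by
      rw [hc, ← Real.rpow_mul (div_nonneg h0.le hη.le),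
        show β * p = β + 1 by linear_combination hβ,
        Real.div_rpow h0.le hη.le]
    have ha1 : a ^ (β + 1) = a ^ β * a := Real.rpow_add_one' h0.le (ne_of_gt (by linarith))
    have hη1 : η ^ (β + 1) = η ^ β * η := Real.rpow_add_one' hη.le (ne_of_gt (by linarith))
    rw [hcp, hcd, hη1, ha1]
    have hβne : β ≠ 0 := ne_of_gt hβ0
    have hηne : η ≠ 0 := ne_of_gt hη
    field_simp
    linear_combination (-|x| ^ p) * hβ

/-- minimality in q (π) -/
lemma q_min_scalar (hp : 1 < p) (hβ : β * (p - 1) = 1) (ha : 0 ≤ a) (hγ : 0 ≤ γ)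
    (hS : 0 < γ ^ β + a ^ β) (x q : ℝ) :
    a * |x - a ^ β / (γ ^ β + a ^ β) * x| ^ p + γ * |a ^ β / (γ ^ β + a ^ β) * x| ^ p
      ≤ a * |x - q| ^ p + γ * |q| ^ p := by
  have hβ0 : 0 < β := by nlinarith
  set S : ℝ := γ ^ β + a ^ β with hSdef
  have hγβ : 0 ≤ γ ^ β := Real.rpow_nonneg hγ β
  have haβ : 0 ≤ a ^ β := Real.rpow_nonneg ha β
  set A : ℝ := γ ^ β / S * |x| with hA
  set B : ℝ := a ^ β / S * |x| with hB
  have hA0 : 0 ≤ A := mul_nonneg (div_nonneg hγβ hS.le) (abs_nonneg x)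
  have hB0 : 0 ≤ B := mul_nonneg (div_nonneg haβ hS.le) (abs_nonneg x)
  have hslope1 : p * a * A ^ (p - 1) = p * a * γ / S ^ (p - 1) * |x| ^ (p - 1) := by
    rw [hA, Real.mul_rpow (div_nonneg hγβ hS.le) (abs_nonneg x),
      Real.div_rpow hγβ hS.le, ← Real.rpow_mul hγ, hβ, Real.rpow_one]
    ring
  have hslope2 : p * γ * B ^ (p - 1) = p * a * γ / S ^ (p - 1) * |x| ^ (p - 1) := by
    rw [hB, Real.mul_rpow (div_nonneg haβ hS.le) (abs_nonneg x),
      Real.div_rpow haβ hS.le, ← Real.rpow_mul ha, hβ, Real.rpow_one]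
    ring
  have hμ0 : 0 ≤ p * a * γ / S ^ (p - 1) * |x| ^ (p - 1) := by
    have h1 : (0:ℝ) ≤ S ^ (p - 1) := Real.rpow_nonneg hS.le _
    have h2 : (0:ℝ) ≤ |x| ^ (p - 1) := Real.rpow_nonneg (abs_nonneg x) _
    have hp0 : (0:ℝ) ≤ p := by linarith
    positivity
  have ht1 := rpow_tangent hp (abs_nonneg (x - q)) hA0
  have ht2 := rpow_tangent hp (abs_nonneg q) hB0
  have ht1' := mul_le_mul_of_nonneg_left ht1 ha
  have ht2' := mul_le_mul_of_nonneg_left ht2 hγ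
  have hsum : A + B = |x| := by rw [hA, hB]; field_simp; ring
  have htri : |x| ≤ |x - q| + |q| := by
    calc |x| = |(x - q) + q| := by ring_nf
      _ ≤ |x - q| + |q| := abs_add_le _ _
  have hxq : |x - a ^ β / S * x| = A := by
    have h3 : x - a ^ β / S * x = γ ^ β / S * x := by field_simp; ring
    rw [h3, abs_mul, abs_of_nonneg (div_nonneg hγβ hS.le), hA]
  have hq2 : |a ^ β / S * x| = B := by
    rw [abs_mul, abs_of_nonneg (div_nonneg haβ hS.le), hB]
  rw [hxq, hq2]
  have k1 : a * (p * A ^ (p - 1) * (|x - q| - A))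
      = p * a * γ / S ^ (p - 1) * |x| ^ (p - 1) * (|x - q| - A) := by
    linear_combination (|x - q| - A) * hslope1
  have k2 : γ * (p * B ^ (p - 1) * (|q| - B))
      = p * a * γ / S ^ (p - 1) * |x| ^ (p - 1) * (|q| - B) := by
    linear_combination (|q| - B) * hslope2
  have hμsum : p * a * γ / S ^ (p - 1) * |x| ^ (p - 1) * A
        + p * a * γ / S ^ (p - 1) * |x| ^ (p - 1) * B
      = p * a * γ / S ^ (p - 1) * |x| ^ (p - 1) * |x| := by
    linear_combination (p * a * γ / S ^ (p - 1) * |x| ^ (p - 1)) * hsum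
  have hlast : 0 ≤ p * a * γ / S ^ (p - 1) * |x| ^ (p - 1) * ((|x - q| + |q|) - |x|) :=
    mul_nonneg hμ0 (by linarith)
  nlinarith [ht1', ht2', k1, k2, hμsum, hlast]

/-- value in q -/
lemma q_val_scalar (hp : 1 < p) (hβ : β * (p - 1) = 1) (ha : 0 ≤ a) (hγ : 0 ≤ γ)
    (hS : 0 < γ ^ β + a ^ β) (x : ℝ) :
    a * |x - a ^ β / (γ ^ β + a ^ β) * x| ^ p + γ * |a ^ β / (γ ^ β + a ^ β) * x| ^ p
      = γ * a / (γ ^ β + a ^ β) ^ (p - 1) * |x| ^ p := by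
  have hβ0 : 0 < β := by nlinarith
  set S : ℝ := γ ^ β + a ^ β with hSdef
  have hγβ : 0 ≤ γ ^ β := Real.rpow_nonneg hγ β
  have haβ : 0 ≤ a ^ β := Real.rpow_nonneg ha β
  have hxq : x - a ^ β / S * x = γ ^ β / S * x := by field_simp; ring
  rw [hxq, abs_mul, abs_mul, abs_of_nonneg (div_nonneg hγβ hS.le),
    abs_of_nonneg (div_nonneg haβ hS.le),
    Real.mul_rpow (div_nonneg hγβ hS.le) (abs_nonneg x),
    Real.mul_rpow (div_nonneg haβ hS.le) (abs_nonneg x),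
    Real.div_rpow hγβ hS.le, Real.div_rpow haβ hS.le]
  have e1 : (γ ^ β) ^ p = γ ^ β * γ := by
    rw [← Real.rpow_mul hγ, show β * p = β + 1 by linear_combination hβ,
      Real.rpow_add_one' hγ (ne_of_gt (by linarith))]
  have e2 : (a ^ β) ^ p = a ^ β * a := by
    rw [← Real.rpow_mul ha, show β * p = β + 1 by linear_combination hβ,
      Real.rpow_add_one' ha (ne_of_gt (by linarith))]
  have e3 : S ^ p = S ^ (p - 1) * S := by
    rw [← Real.rpow_add_one' hS.le (by linarith), sub_add_cancel]
  have hSp : (0:ℝ) < S ^ (p - 1) := Real.rpow_pos_of_pos hS _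
  rw [e1, e2, e3]
  field_simp
  ring

end scalarlemmas

/-- Lemma 2.4, HJB verification identity: if `v ≥ 0` is `C^{1,2}` and
solves `v_t + Lv + F(y,v) = 0` on `[0,T) × ℝ^d` then `V(t,y,x) = v(t,y)|x|^p` solves the
HJB equation; the infimum is attained in the `ξ`-variable at `ξ* = (v/η)^β x`, and,
when `γ(y)^β + v(t,y)^β > 0`, in the `π`-variable at `π* = v^β/(γ^β + v^β) · x`
(here `β = 1/(p−1)`). -/
theorem hjb_verification_identity
    (d n : ℕ) (hd : 1 ≤ d) (hn : 1 ≤ n)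
    (T p θ κ₀ : ℝ) (hT : 0 < T) (hp : 1 < p) (hθ : 0 ≤ θ) (hκ₀ : 0 < κ₀)
    (b : Euc d → Euc d) (σ : Euc d → Matrix (Fin d) (Fin n) ℝ)
    (hbLip : ∃ K : ℝ≥0, LipschitzWith K b) (hbBdd : ∃ C, ∀ y, ‖b y‖ ≤ C)
    (hσLip : ∃ K, ∀ y y' : Euc d, ∀ i k, |σ y i k - σ y' i k| ≤ K * ‖y - y'‖)
    (hσBdd : ∃ C, ∀ y i k, |σ y i k| ≤ C)
    (hell : ∃ ν > 0, ∀ (y : Euc d) (z : Fin d → ℝ),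
      ν * ∑ i, z i ^ 2 ≤ ∑ i, ∑ j, (∑ k, σ y i k * σ y j k) * z j * z i)
    (η lam gam : Euc d → ℝ)
    (hηC2 : ContDiff ℝ 2 η)
    (hηBdd : ∃ C, ∀ y, |η y| ≤ C ∧ ‖fderiv ℝ η y‖ ≤ C ∧ ‖fderiv ℝ (fderiv ℝ η) y‖ ≤ C)
    (hηκ : ∀ y, κ₀ ≤ η y)
    (hlamCont : Continuous lam) (hlam0 : ∀ y, 0 ≤ lam y) (hlamBdd : ∃ C, ∀ y, lam y ≤ C)
    (hgamCont : Continuous gam) (hgam0 : ∀ y, 0 ≤ gam y) (hgamBdd : ∃ C, ∀ y, gam y ≤ C)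
    (v : ℝ → Euc d → ℝ)
    (hv0 : ∀ t ∈ Set.Ico (0 : ℝ) T, ∀ y, 0 ≤ v t y)
    (hvC12 : IsC12On (Set.Ico 0 T) v)
    (hpde : ∀ t ∈ Set.Ico (0 : ℝ) T, ∀ y,
      partialT (Set.Ico 0 T) v t y + Lop b σ v t y + hjbF p θ η lam gam y (v t y) = 0) :
    ∀ t ∈ Set.Ico (0 : ℝ) T, ∀ (y : Euc d) (x : ℝ),
      (partialT (Set.Ico 0 T) (fun s z => v s z * |x| ^ p) t y
        + Lop b σ (fun s z => v s z * |x| ^ p) t y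
        + ⨅ c : ℝ × ℝ, hjbInner p θ η lam gam v t y x c.1 c.2 = 0) ∧
      (∀ ξ q : ℝ,
        hjbInner p θ η lam gam v t y x ((v t y / η y) ^ (1 / (p - 1)) * x) q
          ≤ hjbInner p θ η lam gam v t y x ξ q) ∧
      (0 < gam y ^ (1 / (p - 1)) + v t y ^ (1 / (p - 1)) →
        ∀ ξ q : ℝ,
          hjbInner p θ η lam gam v t y x ξ
              (v t y ^ (1 / (p - 1)) / (gam y ^ (1 / (p - 1)) + v t y ^ (1 / (p - 1))) * x)
            ≤ hjbInner p θ η lam gam v t y x ξ q) := by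
  
  intro t ht y x
  have hβ : (1 / (p - 1)) * (p - 1) = 1 := by
    rw [one_div]; exact inv_mul_cancel₀ (by linarith)
  have hβ0 : 0 < 1 / (p - 1) := div_pos one_pos (by linarith)
  have hηy : (0:ℝ) < η y := lt_of_lt_of_le hκ₀ (hηκ y)
  have hvy : 0 ≤ v t y := hv0 t ht y
  have hγy : 0 ≤ gam y := hgam0 y
  have hderiv : deriv (fun z : ℝ => v t y * |z| ^ p) x
      = v t y * (p * |x| ^ (p - 2) * x) :=
    (((hasDerivAt_abs_rpow x hp)).const_mul (v t y)).deriv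
  -- statement 2 : minimality in ξ
  have stmt2 : ∀ ξ q : ℝ,
      hjbInner p θ η lam gam v t y x ((v t y / η y) ^ (1 / (p - 1)) * x) q
        ≤ hjbInner p θ η lam gam v t y x ξ q := by
    intro ξ q
    simp only [hjbInner, hderiv]
    have h := xi_min_scalar hp hβ hηy hvy x ξ
    linarith
  -- statement 3 : minimality in q
  have stmt3 : 0 < gam y ^ (1 / (p - 1)) + v t y ^ (1 / (p - 1)) →
      ∀ ξ q : ℝ,
        hjbInner p θ η lam gam v t y x ξ
            (v t y ^ (1 / (p - 1)) / (gam y ^ (1 / (p - 1)) + v t y ^ (1 / (p - 1))) * x)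
          ≤ hjbInner p θ η lam gam v t y x ξ q := by
    intro hS ξ q
    simp only [hjbInner, hderiv]
    have h1 := q_min_scalar hp hβ hvy hγy hS x q
    have h2 := mul_le_mul_of_nonneg_left h1 hθ
    nlinarith [h2]
  refine ⟨?_, stmt2, stmt3⟩
  -- now the PDE identity
  -- value of the infimum
  have hval : hjbInner p θ η lam gam v t y x ((v t y / η y) ^ (1 / (p - 1)) * x)
      (v t y ^ (1 / (p - 1)) / (gam y ^ (1 / (p - 1)) + v t y ^ (1 / (p - 1))) * x)
      = hjbF p θ η lam gam y (v t y) * |x| ^ p := by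
    rcases lt_or_ge 0 (gam y ^ (1 / (p - 1)) + v t y ^ (1 / (p - 1))) with hS | hS
    · simp only [hjbInner, hjbF, hderiv]
      have e1 := xi_val_scalar hp hβ hηy hvy x
      have e2 := q_val_scalar hp hβ hvy hγy hS x
      linear_combination e1 + θ * e2
    · -- degenerate case: v t y = 0 and gam y = 0
      have hγβ : 0 ≤ gam y ^ (1 / (p - 1)) := Real.rpow_nonneg hγy _
      have haβ : 0 ≤ v t y ^ (1 / (p - 1)) := Real.rpow_nonneg hvy _
      have hγ0 : gam y = 0 := by
        by_contra h
        exact absurd (Real.rpow_pos_of_pos (lt_of_le_of_ne hγy (Ne.symm h)) (1 / (p - 1)))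
          (by nlinarith)
      have ha0 : v t y = 0 := by
        by_contra h
        exact absurd (Real.rpow_pos_of_pos (lt_of_le_of_ne hvy (Ne.symm h)) (1 / (p - 1)))
          (by nlinarith)
      have hxi0 : (v t y / η y) ^ (1 / (p - 1)) = 0 := by
        rw [ha0, zero_div, Real.zero_rpow (ne_of_gt hβ0)]
      have hq0 : v t y ^ (1 / (p - 1)) / (gam y ^ (1 / (p - 1)) + v t y ^ (1 / (p - 1))) = 0 := by
        rw [ha0, Real.zero_rpow (ne_of_gt hβ0), zero_div]
      have z1 : (0:ℝ) ^ (1 / (p - 1) + 1) = 0 :=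
        Real.zero_rpow (ne_of_gt (by linarith : (0:ℝ) < 1 / (p - 1) + 1))
      have z2 : (0:ℝ) ^ p = 0 := Real.zero_rpow (ne_of_gt (by linarith : (0:ℝ) < p))
      rw [hxi0, hq0, zero_mul]
      simp only [hjbInner, hjbF, hderiv, ha0, hγ0, zero_mul, mul_zero, neg_zero,
        abs_zero, sub_zero, zero_add, add_zero, zero_div, z1, z2]
  -- lower bound
  have hlow : ∀ c : ℝ × ℝ, hjbF p θ η lam gam y (v t y) * |x| ^ p
      ≤ hjbInner p θ η lam gam v t y x c.1 c.2 := by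
    intro c
    rcases lt_or_ge 0 (gam y ^ (1 / (p - 1)) + v t y ^ (1 / (p - 1))) with hS | hS
    · calc hjbF p θ η lam gam y (v t y) * |x| ^ p
          = hjbInner p θ η lam gam v t y x ((v t y / η y) ^ (1 / (p - 1)) * x)
            (v t y ^ (1 / (p - 1)) / (gam y ^ (1 / (p - 1)) + v t y ^ (1 / (p - 1))) * x) :=
            hval.symm
        _ ≤ hjbInner p θ η lam gam v t y x ((v t y / η y) ^ (1 / (p - 1)) * x) c.2 :=
            stmt3 hS _ c.2
        _ ≤ hjbInner p θ η lam gam v t y x c.1 c.2 := stmt2 c.1 c.2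
    · have hγβ : 0 ≤ gam y ^ (1 / (p - 1)) := Real.rpow_nonneg hγy _
      have haβ : 0 ≤ v t y ^ (1 / (p - 1)) := Real.rpow_nonneg hvy _
      have hγ0 : gam y = 0 := by
        by_contra h
        exact absurd (Real.rpow_pos_of_pos (lt_of_le_of_ne hγy (Ne.symm h)) (1 / (p - 1)))
          (by nlinarith)
      have ha0 : v t y = 0 := by
        by_contra h
        exact absurd (Real.rpow_pos_of_pos (lt_of_le_of_ne hvy (Ne.symm h)) (1 / (p - 1)))
          (by nlinarith)
      have hqind : hjbInner p θ η lam gam v t y x ((v t y / η y) ^ (1 / (p - 1)) * x)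
          (v t y ^ (1 / (p - 1)) / (gam y ^ (1 / (p - 1)) + v t y ^ (1 / (p - 1))) * x)
          = hjbInner p θ η lam gam v t y x ((v t y / η y) ^ (1 / (p - 1)) * x) c.2 := by
        simp only [hjbInner, ha0, hγ0]
        ring
      calc hjbF p θ η lam gam y (v t y) * |x| ^ p
          = hjbInner p θ η lam gam v t y x ((v t y / η y) ^ (1 / (p - 1)) * x) c.2 := by
            rw [← hqind]; exact hval.symm
        _ ≤ hjbInner p θ η lam gam v t y x c.1 c.2 := stmt2 c.1 c.2
  have hInf : (⨅ c : ℝ × ℝ, hjbInner p θ η lam gam v t y x c.1 c.2)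
      = hjbF p θ η lam gam y (v t y) * |x| ^ p := by
    refine le_antisymm ?_ (le_ciInf hlow)
    have hb : BddBelow (Set.range fun c : ℝ × ℝ => hjbInner p θ η lam gam v t y x c.1 c.2) := by
      refine ⟨hjbF p θ η lam gam y (v t y) * |x| ^ p, ?_⟩
      rintro z ⟨c, rfl⟩
      exact hlow c
    exact le_of_le_of_eq (ciInf_le hb
      (((v t y / η y) ^ (1 / (p - 1)) * x),
        (v t y ^ (1 / (p - 1)) / (gam y ^ (1 / (p - 1)) + v t y ^ (1 / (p - 1))) * x))) hval
  -- linearity of partialT and Lop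
  have hvt2 : ContDiff ℝ 2 (v t) := hvC12.2.1 t ht
  have hvtd : Differentiable ℝ (v t) := hvt2.differentiable (by norm_num)
  have hfd : Differentiable ℝ (fderiv ℝ (v t)) :=
    (hvt2.fderiv_right (m := 1) (by norm_num)).differentiable (by norm_num)
  have hfder : ∀ z, fderiv ℝ (fun z' => v t z' * |x| ^ p) z = |x| ^ p • fderiv ℝ (v t) z :=
    fun z => fderiv_mul_const (hvtd z) _
  have hgrad : ∀ i, gradY (fun s z => v s z * |x| ^ p) t y i = gradY v t y i * |x| ^ p := by
    intro i
    show fderiv ℝ (fun z' => v t z' * |x| ^ p) y (EuclideanSpace.single i 1)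
      = gradY v t y i * |x| ^ p
    rw [hfder y]
    simp [gradY, mul_comm]
  have hhess : ∀ i j, hessY (fun s z => v s z * |x| ^ p) t y i j
      = hessY v t y i j * |x| ^ p := by
    intro i j
    show fderiv ℝ (fun z => fderiv ℝ (fun z' => v t z' * |x| ^ p) z
        (EuclideanSpace.single j 1)) y (EuclideanSpace.single i 1)
      = hessY v t y i j * |x| ^ p
    have congr1 : (fun z => fderiv ℝ (fun z' => v t z' * |x| ^ p) z (EuclideanSpace.single j 1))
        = (fun z => fderiv ℝ (v t) z (EuclideanSpace.single j 1) * |x| ^ p) := by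
      funext z
      rw [hfder z]
      simp [mul_comm]
    rw [congr1]
    have hdiff : DifferentiableAt ℝ (fun z => fderiv ℝ (v t) z (EuclideanSpace.single j 1)) y :=
      (hfd y).clm_apply (differentiableAt_const _)
    rw [fderiv_mul_const hdiff]
    simp [hessY, mul_comm]
  have P2 : Lop b σ (fun s z => v s z * |x| ^ p) t y = Lop b σ v t y * |x| ^ p := by
    have e1 : ∀ i : Fin d, ∑ j, (∑ k, σ y i k * σ y j k) * (hessY v t y i j * |x| ^ p)
        = (∑ j, (∑ k, σ y i k * σ y j k) * hessY v t y i j) * |x| ^ p := by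
      intro i
      rw [Finset.sum_mul]
      exact Finset.sum_congr rfl fun j _ => by ring
    have e2 : ∑ i, b y i * (gradY v t y i * |x| ^ p)
        = (∑ i, b y i * gradY v t y i) * |x| ^ p := by
      rw [Finset.sum_mul]
      exact Finset.sum_congr rfl fun i _ => by ring
    simp only [Lop, hhess, hgrad, e1]
    rw [← Finset.sum_mul, e2]
    ring
  have P1 : partialT (Set.Ico 0 T) (fun s z => v s z * |x| ^ p) t y
      = partialT (Set.Ico 0 T) v t y * |x| ^ p := by
    show derivWithin (fun r => v r y * |x| ^ p) (Set.Ico 0 T) t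
      = derivWithin (fun r => v r y) (Set.Ico 0 T) t * |x| ^ p
    exact derivWithin_mul_const (hvC12.1 t ht y) _
  rw [P1, P2, hInf]
  linear_combination |x| ^ p * hpde t ht y
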